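/- For a square matrix M over a commutative ring, M times its adjugate M* equals det(M) times the identity matrix; consequently, if D = [A, 0]·[A, B1]*·B2 where [A,B1] is a d×d square matrix formed by concatenating A with the first columns B1 of B, then every column of D plus a suitable linear combination of columns of B1 lies in det([A,B1]) times the span of the columns B2, so the column span of D is contained in the column span of B = [B1, B2]. -/

import Mathlib

open Matrix

/-- The `F`-linear span of the columns of a matrix. -/
noncomputable def colSpan {F : Type*} [Field F] {m n : Type*} [Fintype m] [Fintype n]
    (M : Matrix m n F) : Submodule F (m → F) :=
  Submodule.span F (Set.range M.transpose)

lemma mem_colSpan_mulVec {F : Type*} [Field F] {m n : Type*} [Fintype m] [Fintype n]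
    (M : Matrix m n F) (v : n → F) : M.mulVec v ∈ colSpan M := by
  have h : M.mulVec v = ∑ k, v k • M.transpose k := by
    ext i
    simp [Matrix.mulVec, dotProduct, mul_comm, Finset.sum_apply]
  rw [h]
  exact Submodule.sum_mem _ fun k _ => Submodule.smul_mem _ _ (Submodule.subset_span ⟨k, rfl⟩)

/-- `M · adjugate(M) = det(M) · I`; consequently, with `N = [A, B1]` square (`s + a = d`),
`Apad = [A, 0]`, `B1pad = [0, B1]` and `D = Apad · N* · B2`, every column of `D` plus the
corresponding linear combination of columns of `B1` equals `det(N)` times the corresponding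
column of `B2`, and the column span of `D` is contained in the column span of `B = [B1, B2]`. -/
theorem stmt3 {F : Type*} [Field F] {d s a b : ℕ} (hsa : s + a = d)
    (A : Matrix (Fin d) (Fin s) F) (B1 : Matrix (Fin d) (Fin a) F) (B2 : Matrix (Fin d) (Fin b) F)
    (N Apad B1pad : Matrix (Fin d) (Fin d) F) (D : Matrix (Fin d) (Fin b) F)
    (hN : N = (Matrix.fromCols A B1).submatrix id (finSumFinEquiv.trans (finCongr hsa)).symm)
    (hApad : Apad = (Matrix.fromCols A (0 : Matrix (Fin d) (Fin a) F)).submatrix id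
      (finSumFinEquiv.trans (finCongr hsa)).symm)
    (hB1pad : B1pad = (Matrix.fromCols (0 : Matrix (Fin d) (Fin s) F) B1).submatrix id
      (finSumFinEquiv.trans (finCongr hsa)).symm)
    (hD : D = Apad * N.adjugate * B2) :
    (∀ M : Matrix (Fin d) (Fin d) F, M * M.adjugate = M.det • (1 : Matrix (Fin d) (Fin d) F)) ∧
    D + B1pad * N.adjugate * B2 = N.det • B2 ∧
    colSpan D ≤ colSpan (Matrix.fromCols B1 B2) := by
  have hsum : Apad + B1pad = N := by
    subst hApad hB1pad hN
    ext i j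
    cases h : (finSumFinEquiv.trans (finCongr hsa)).symm j <;>
      simp only [Matrix.add_apply, Matrix.submatrix_apply, id, h] <;> simp [Matrix.fromCols]
  have key : D + B1pad * N.adjugate * B2 = N.det • B2 := by
    rw [hD, ← Matrix.add_mul, ← Matrix.add_mul, hsum, Matrix.mul_adjugate, Matrix.smul_mul, Matrix.one_mul]
  refine ⟨fun M => Matrix.mul_adjugate M, key, ?_⟩
  have hDeq : D = N.det • B2 - B1pad * N.adjugate * B2 := by
    rw [← key]; simp
  -- column span containment
  rw [colSpan, Submodule.span_le]
  rintro _ ⟨j, rfl⟩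
  have hB2col : B2.transpose j ∈ colSpan (Matrix.fromCols B1 B2) := by
    apply Submodule.subset_span
    exact ⟨Sum.inr j, rfl⟩
  have hB1pad_le : colSpan B1pad ≤ colSpan (Matrix.fromCols B1 B2) := by
    rw [colSpan, Submodule.span_le]
    rintro _ ⟨k, rfl⟩
    rw [hB1pad]
    cases h : (finSumFinEquiv.trans (finCongr hsa)).symm k with
    | inl k' =>
        have : ((Matrix.fromCols (0 : Matrix (Fin d) (Fin s) F) B1).submatrix id
            (finSumFinEquiv.trans (finCongr hsa)).symm).transpose k = 0 := by
          ext i; simp only [Matrix.transpose_apply, Matrix.submatrix_apply, id, h]; simp [Matrix.fromCols]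
        rw [this]; exact Submodule.zero_mem _
    | inr k' =>
        have : ((Matrix.fromCols (0 : Matrix (Fin d) (Fin s) F) B1).submatrix id
            (finSumFinEquiv.trans (finCongr hsa)).symm).transpose k
            = (Matrix.fromCols B1 B2).transpose (Sum.inl k') := by
          ext i; simp only [Matrix.transpose_apply, Matrix.submatrix_apply, id, h]; simp [Matrix.fromCols]
        rw [this]
        exact Submodule.subset_span ⟨Sum.inl k', rfl⟩
  have hterm : (B1pad * N.adjugate * B2).transpose j
      ∈ colSpan (Matrix.fromCols B1 B2) := by
    have : (B1pad * N.adjugate * B2).transpose j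
        = B1pad.mulVec ((N.adjugate * B2).transpose j) := by
      ext i
      simp [Matrix.mul_assoc, Matrix.mul_apply, Matrix.mulVec, dotProduct]
    rw [this]
    exact hB1pad_le (mem_colSpan_mulVec _ _)
  have : D.transpose j = N.det • B2.transpose j - (B1pad * N.adjugate * B2).transpose j := by
    rw [hDeq, Matrix.transpose_sub, Matrix.transpose_smul]; rfl
  rw [this]
  exact Submodule.sub_mem _ (Submodule.smul_mem _ _ hB2col) hterm
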